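/- In the rank-one perturbation setting, if z ∉ {E_n} satisfies F(z) = α, then the vector G_z = Σ_n (a_n/(E_n − z))φ_n satisfies: for every w ∉ {E_n} with F(w) ≠ α, R_α(w) G_z = (z − w)⁻¹ G_z; i.e., G_z is an eigenvector of the perturbed resolvent with eigenvalue (z − w)⁻¹, so z is a simple eigenvalue of the point scatterer. -/

import Mathlib

open Filter Topology
open scoped RealInnerProductSpace

/-- If `F(z) = α` then the Green's vector `G_z` is an eigenvector of the
perturbed resolvent `R_α(w)` with eigenvalue `(z − w)⁻¹`, so `z` is an
eigenvalue of the point scatterer. -/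
theorem greens_vector_is_eigenvector_of_perturbed_resolvent
    (H : Type*) [NormedAddCommGroup H] [InnerProductSpace ℝ H] [CompleteSpace H]
    (φ : HilbertBasis ℕ ℝ H)
    (E a : ℕ → ℝ) (hEpos : ∀ n, 0 < E n) (hEinj : Function.Injective E)
    (hEtop : Tendsto E atTop atTop)
    (ha : ∀ n, a n ≠ 0)
    (hsum : Summable (fun n => a n ^ 2 * E n / (E n ^ 2 + 1)))
    (F : ℝ → ℝ)
    (hF : ∀ x, x ∉ Set.range E →
      F x = ∑' n, a n ^ 2 * (1 / (E n - x) - E n / (E n ^ 2 + 1)))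
    (G : ℝ → H)
    (hG : ∀ x, x ∉ Set.range E →
      HasSum (fun n => (a n / (E n - x)) • (φ n : H)) (G x))
    (Res : ℝ → H →L[ℝ] H)
    (hRes : ∀ x, x ∉ Set.range E → ∀ n, Res x (φ n) = (E n - x)⁻¹ • (φ n : H))
    (α : ℝ) (R : ℝ → H →L[ℝ] H)
    (hR : ∀ x, x ∉ Set.range E → F x ≠ α →
      ∀ f : H, R x f = Res x f + ((α - F x)⁻¹ * ⟪G x, f⟫) • G x)
    (z : ℝ) (hz : z ∉ Set.range E) (hFz : F z = α)
    (w : ℝ) (hw : w ∉ Set.range E) (hFw : F w ≠ α) (hzw : z ≠ w) :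
    R w (G z) = (z - w)⁻¹ • G z := by
  -- nonzero denominators
  have hEx : ∀ x : ℝ, x ∉ Set.range E → ∀ n, E n - x ≠ 0 := by
    intro x hx n h
    exact hx ⟨n, by linarith⟩
  have hEz := hEx z hz
  have hEw := hEx w hw
  have hzw' : z - w ≠ 0 := sub_ne_zero.mpr hzw
  have hαF : α - F w ≠ 0 := sub_ne_zero.mpr (Ne.symm hFw)
  have hEsq : ∀ n, E n ^ 2 + 1 ≠ 0 := fun n => by positivity
  -- inner products of G x with basis vectors
  have hGinner : ∀ x : ℝ, x ∉ Set.range E → ∀ n : ℕ,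
      ⟪G x, (φ n : H)⟫ = a n / (E n - x) := by
    intro x hx n
    have h1 : HasSum (fun m => (innerSL ℝ (φ n : H)) ((a m / (E m - x)) • (φ m : H)))
        ((innerSL ℝ (φ n : H)) (G x)) := (hG x hx).mapL _
    have horth := orthonormal_iff_ite.mp φ.orthonormal
    have heq : (fun m => (innerSL ℝ (φ n : H)) ((a m / (E m - x)) • (φ m : H)))
        = fun m => if m = n then a n / (E n - x) else 0 := by
      funext m
      simp only [innerSL_apply_apply, inner_smul_right, horth n m]
      by_cases h : m = n
      · subst h; simp
      · simp [h, Ne.symm h]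
    rw [heq] at h1
    have h2 := hasSum_ite_eq n (a n / (E n - x))
    rw [real_inner_comm]
    exact (h1.unique h2) ▸ rfl
  -- the inner product ⟪G w, G z⟫ as a sum
  have hIsum : HasSum (fun n => a n ^ 2 / ((E n - z) * (E n - w))) ⟪G w, G z⟫ := by
    have h1 : HasSum (fun n => (innerSL ℝ (G w)) ((a n / (E n - z)) • (φ n : H)))
        ((innerSL ℝ (G w)) (G z)) := (hG z hz).mapL _
    have heq : (fun n => (innerSL ℝ (G w)) ((a n / (E n - z)) • (φ n : H)))
        = fun n => a n ^ 2 / ((E n - z) * (E n - w)) := by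
      funext n
      simp only [innerSL_apply_apply, inner_smul_right, hGinner w hw n]
      field_simp
    rwa [heq] at h1
  -- Res w (G z) = (z - w)⁻¹ • (G z - G w)
  have hResGz : Res w (G z) = (z - w)⁻¹ • (G z - G w) := by
    have h1 : HasSum (fun n => (Res w) ((a n / (E n - z)) • (φ n : H)))
        ((Res w) (G z)) := (hG z hz).mapL _
    have heq1 : (fun n => (Res w) ((a n / (E n - z)) • (φ n : H)))
        = fun n => (a n / ((E n - z) * (E n - w))) • (φ n : H) := by
      funext n
      rw [map_smul, hRes w hw n, smul_smul]
      congr 1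
      field_simp
    rw [heq1] at h1
    have h2 : HasSum (fun n => (z - w)⁻¹ • ((a n / (E n - z)) • (φ n : H)
        - (a n / (E n - w)) • (φ n : H))) ((z - w)⁻¹ • (G z - G w)) :=
      ((hG z hz).sub (hG w hw)).const_smul _
    have heq2 : (fun n => (z - w)⁻¹ • ((a n / (E n - z)) • (φ n : H)
        - (a n / (E n - w)) • (φ n : H)))
        = fun n => (a n / ((E n - z) * (E n - w))) • (φ n : H) := by
      funext n
      rw [← sub_smul, smul_smul]
      congr 1
      rw [div_sub_div _ _ (hEz n) (hEw n), inv_mul_eq_div, div_div,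
        div_eq_div_iff (mul_ne_zero (mul_ne_zero (hEz n) (hEw n)) hzw')
          (mul_ne_zero (hEz n) (hEw n))]
      ring
    rw [heq2] at h2
    exact h1.unique h2
  -- summability of the defining series of F
  have hsummand : ∀ x : ℝ,
      Summable (fun n => a n ^ 2 * (1 / (E n - x) - E n / (E n ^ 2 + 1))) := by
    intro x
    apply Summable.of_norm_bounded_eventually_nat
      (g := fun n => (2 * (1 + |x|)) * (a n ^ 2 * E n / (E n ^ 2 + 1))) (hsum.mul_left _)
    filter_upwards [hEtop.eventually_ge_atTop (2 * |x| + 1)] with n hn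
    have hE1 : (1 : ℝ) ≤ E n := by have := abs_nonneg x; linarith
    have hExp : (E n + 1) / 2 ≤ E n - x := by
      have hx := le_abs_self x; linarith
    have hExpos : (1 : ℝ) ≤ E n - x := by linarith
    have hEn0 : E n - x ≠ 0 := by linarith
    have hsq : (0 : ℝ) < E n ^ 2 + 1 := by positivity
    have hexpr : 1 / (E n - x) - E n / (E n ^ 2 + 1)
        = (1 + x * E n) / ((E n - x) * (E n ^ 2 + 1)) := by
      field_simp
      ring
    rw [Real.norm_eq_abs, abs_mul, hexpr, abs_div]
    have habs : |a n ^ 2| = a n ^ 2 := abs_of_nonneg (sq_nonneg _)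
    rw [habs]
    have hden : |(E n - x) * (E n ^ 2 + 1)| = (E n - x) * (E n ^ 2 + 1) := by
      apply abs_of_pos; positivity
    rw [hden]
    have hnum : |1 + x * E n| ≤ (1 + |x|) * E n := by
      calc |1 + x * E n| ≤ |(1 : ℝ)| + |x * E n| := abs_add_le _ _
        _ = 1 + |x| * E n := by
            rw [abs_one, abs_mul, abs_of_pos (hEpos n)]
        _ ≤ E n + |x| * E n := by linarith
        _ = (1 + |x|) * E n := by ring
    have hstep : |1 + x * E n| / ((E n - x) * (E n ^ 2 + 1))
        ≤ ((1 + |x|) * E n) / (1 * (E n ^ 2 + 1)) := by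
      apply div_le_div₀ (by positivity) hnum (by positivity)
      apply mul_le_mul_of_nonneg_right hExpos (le_of_lt hsq)
    calc a n ^ 2 * (|1 + x * E n| / ((E n - x) * (E n ^ 2 + 1)))
        ≤ a n ^ 2 * (((1 + |x|) * E n) / (1 * (E n ^ 2 + 1))) := by
          apply mul_le_mul_of_nonneg_left hstep (sq_nonneg _)
      _ ≤ 2 * (1 + |x|) * (a n ^ 2 * E n / (E n ^ 2 + 1)) := by
          rw [one_mul]
          have h1x : (0 : ℝ) ≤ 1 + |x| := by have := abs_nonneg x; linarith
          have hterm : (0 : ℝ) ≤ a n ^ 2 * E n / (E n ^ 2 + 1) := by positivity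
          have : a n ^ 2 * ((1 + |x|) * E n / (E n ^ 2 + 1))
              = (1 + |x|) * (a n ^ 2 * E n / (E n ^ 2 + 1)) := by ring
          rw [this]
          nlinarith
  -- F z - F w = (z - w) * ⟪G w, G z⟫
  have hFzsum : HasSum (fun n => a n ^ 2 * (1 / (E n - z) - E n / (E n ^ 2 + 1))) (F z) := by
    rw [hF z hz]; exact (hsummand z).hasSum
  have hFwsum : HasSum (fun n => a n ^ 2 * (1 / (E n - w) - E n / (E n ^ 2 + 1))) (F w) := by
    rw [hF w hw]; exact (hsummand w).hasSum
  have hdiff := hFzsum.sub hFwsum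
  have heqd : (fun n => a n ^ 2 * (1 / (E n - z) - E n / (E n ^ 2 + 1))
      - a n ^ 2 * (1 / (E n - w) - E n / (E n ^ 2 + 1)))
      = fun n => (z - w) * (a n ^ 2 / ((E n - z) * (E n - w))) := by
    funext n
    have h1 := hEz n
    have h2 := hEw n
    field_simp
    ring
  rw [heqd] at hdiff
  have hFzw : F z - F w = (z - w) * ⟪G w, G z⟫ :=
    hdiff.unique (hIsum.mul_left _)
  have hI : ⟪G w, G z⟫ = (α - F w) / (z - w) := by
    rw [eq_div_iff hzw']
    rw [← hFz, hFzw]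
    ring
  -- conclude
  rw [hR w hw hFw (G z), hResGz, hI]
  have hcoef : (α - F w)⁻¹ * ((α - F w) / (z - w)) = (z - w)⁻¹ := by
    field_simp
  rw [hcoef, smul_sub]
  abel
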